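/- Let s = 12, m ≥ 1, and consider the one-sided local trigonometric regression design X_c of size (sm+1) × 12 whose rows for j = 0, 1, ..., sm are (1, cos(πj/6), sin(πj/6), ..., cos(5πj/6), sin(5πj/6), cos(πj)). Let x_0 be its first row (at j = 0). Then the weight vector w_c = X_c (X_c' X_c)^{-1} x_0 has entries w_{cj} = 1/(m+1) for j = 0, 12, 24, ..., 12m and w_{cj} = 0 otherwise. -/

import Mathlib

open Real Matrix

/-- The `(12m+1) × 12` one-sided monthly trigonometric design matrix, with rows indexed by
`j = 0, 1, ..., 12m`, each row being
`(1, cos(πj/6), sin(πj/6), ..., cos(5πj/6), sin(5πj/6), cos(πj))`. -/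
noncomputable def XcMonthly (m : ℕ) : Matrix (Fin (12 * m + 1)) (Fin 12) ℝ :=
  fun i c =>
    let j : ℝ := (i.val : ℝ)
    if c.val = 0 then 1
    else if c.val = 11 then Real.cos (π * j)
    else if c.val % 2 = 1 then Real.cos (π * (((c.val + 1) / 2 : ℕ) : ℝ) * j / 6)
    else Real.sin (π * (((c.val / 2 : ℕ)) : ℝ) * j / 6)


section ClimateAux
open Finset


lemma cos_sum_twelve (n : ℤ) :
    ∑ k : Fin 12, Real.cos (π * n * k / 6) = if (12:ℤ) ∣ n then 12 else 0 := by
  by_cases h : (12:ℤ) ∣ n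
  · rw [if_pos h]
    obtain ⟨t, rfl⟩ := h
    have hc : ∀ k : Fin 12, Real.cos (π * ((12*t : ℤ):ℝ) * k / 6) = 1 := by
      intro k
      have e : (π * ((12*t : ℤ):ℝ) * k / 6) = ((t * k : ℤ) : ℝ) * (2 * π) := by
        push_cast; ring
      rw [e, Real.cos_int_mul_two_pi]
    calc ∑ k : Fin 12, Real.cos (π * ((12*t : ℤ):ℝ) * k / 6) = ∑ k : Fin 12, (1:ℝ) :=
          Finset.sum_congr rfl (fun k _ => hc k)
      _ = 12 := by simp
  · rw [if_neg h]
    set z : ℂ := Complex.exp ((π * n / 6 : ℝ) * Complex.I) with hz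
    have hterm : ∀ k : Fin 12, Real.cos (π * n * k / 6) = (z ^ (k:ℕ)).re := by
      intro k
      rw [hz, ← Complex.exp_nat_mul]
      have e : ((k:ℕ):ℂ) * (((π * n / 6 : ℝ):ℂ) * Complex.I) = ((π * n * k / 6 : ℝ):ℂ) * Complex.I := by
        push_cast; ring
      rw [e, Complex.exp_ofReal_mul_I_re]
    have hz1 : z ≠ 1 := by
      rw [hz, Ne, Complex.exp_eq_one_iff]
      rintro ⟨q, hq⟩
      apply h
      rw [show ((q:ℂ) * (2 * ↑π * Complex.I)) = ((q * (2*π) : ℝ):ℂ) * Complex.I by push_cast; ring] at hq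
      have hI : (Complex.I : ℂ) ≠ 0 := Complex.I_ne_zero
      have hr : (π * n / 6 : ℝ) = (q * (2*π) : ℝ) :=
        Complex.ofReal_injective (mul_right_cancel₀ hI hq)
      have : (n : ℝ) = ((12 * q : ℤ) : ℝ) := by
        have hπ : (π:ℝ) ≠ 0 := Real.pi_ne_zero
        field_simp at hr
        push_cast
        nlinarith [hr, Real.pi_pos]
      exact ⟨q, by exact_mod_cast this⟩
    have hz12 : z ^ 12 = 1 := by
      rw [hz, ← Complex.exp_nat_mul]
      rw [show ((12:ℕ):ℂ) * (((π * n / 6 : ℝ):ℂ) * Complex.I) = (n:ℂ) * (2 * ↑π * Complex.I) by push_cast; ring]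
      exact Complex.exp_int_mul_two_pi_mul_I n
    have hsum : ∑ k : Fin 12, z ^ (k:ℕ) = 0 := by
      rw [Fin.sum_univ_eq_sum_range (fun k => z ^ k) 12, geom_sum_eq hz1, hz12]
      simp
    calc ∑ k : Fin 12, Real.cos (π * n * k / 6) = ∑ k : Fin 12, (z ^ (k:ℕ)).re :=
          Finset.sum_congr rfl (fun k _ => hterm k)
      _ = (∑ k : Fin 12, z ^ (k:ℕ)).re := (Complex.re_sum _ _).symm
      _ = 0 := by rw [hsum]; simp

lemma dirichlet (n : ℤ) :
    1/12 + (Real.cos (π * n / 6) + Real.cos (π * 2 * n / 6) + Real.cos (π * 3 * n / 6)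
      + Real.cos (π * 4 * n / 6) + Real.cos (π * 5 * n / 6)) / 6 + Real.cos (π * n) / 12
      = if (12:ℤ) ∣ n then 1 else 0 := by
  have h := cos_sum_twelve n
  rw [Fin.sum_univ_eq_sum_range (fun k => Real.cos (π * n * k / 6)) 12] at h
  have sym : ∀ x : ℝ, Real.cos (π * n * (12 - x) / 6) = Real.cos (π * n * x / 6) := by
    intro x
    rw [show π * (n:ℝ) * (12 - x) / 6 = (n:ℝ) * (2*π) - π * n * x / 6 by ring]
    exact Real.cos_int_mul_two_pi_sub _ _
  have e7 : Real.cos (π * (n:ℝ) * 7 / 6) = Real.cos (π * n * 5 / 6) := by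
    have := sym 5; norm_num at this; exact this
  have e8 : Real.cos (π * (n:ℝ) * 8 / 6) = Real.cos (π * n * 4 / 6) := by
    have := sym 4; norm_num at this; exact this
  have e9 : Real.cos (π * (n:ℝ) * 9 / 6) = Real.cos (π * n * 3 / 6) := by
    have := sym 3; norm_num at this; exact this
  have e10 : Real.cos (π * (n:ℝ) * 10 / 6) = Real.cos (π * n * 2 / 6) := by
    have := sym 2; norm_num at this; exact this
  have e11 : Real.cos (π * (n:ℝ) * 11 / 6) = Real.cos (π * n / 6) := by
    have := sym 1; norm_num at this; exact this
  simp only [Finset.sum_range_succ, Finset.sum_range_zero] at h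
  norm_num at h
  rw [e7, e8, e9, e10, e11] at h
  ring_nf at h ⊢
  by_cases hd : (12:ℤ) ∣ n
  · rw [if_pos hd] at h ⊢; linarith
  · rw [if_neg hd] at h ⊢; linarith


noncomputable def fEnt (c : Fin 12) (j : ℕ) : ℝ :=
  if c.val = 0 then 1
  else if c.val = 11 then Real.cos (π * j)
  else if c.val % 2 = 1 then Real.cos (π * (((c.val + 1) / 2 : ℕ) : ℝ) * j / 6)
  else Real.sin (π * (((c.val / 2 : ℕ)) : ℝ) * j / 6)

set_option maxHeartbeats 1000000 in
lemma fEnt_add_twelve (c : Fin 12) (j : ℕ) : fEnt c (j + 12) = fEnt c j := by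
  have hc : ∀ a : ℤ, Real.cos (π * (a:ℝ) * ((j:ℝ) + 12) / 6) = Real.cos (π * a * j / 6) := by
    intro a
    rw [show π * (a:ℝ) * ((j:ℝ) + 12) / 6 = π * a * j / 6 + (a:ℝ) * (2*π) by ring]
    exact Real.cos_add_int_mul_two_pi _ a
  have hs : ∀ a : ℤ, Real.sin (π * (a:ℝ) * ((j:ℝ) + 12) / 6) = Real.sin (π * a * j / 6) := by
    intro a
    rw [show π * (a:ℝ) * ((j:ℝ) + 12) / 6 = π * a * j / 6 + (a:ℝ) * (2*π) by ring]
    exact Real.sin_add_int_mul_two_pi _ a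
  have h1c := hc 1; have h1s := hs 1; have h2c := hc 2; have h2s := hs 2
  have h3c := hc 3; have h3s := hs 3; have h4c := hc 4; have h4s := hs 4
  have h5c := hc 5; have h5s := hs 5
  norm_num at h1c h1s h2c h2s h3c h3s h4c h4s h5c h5s
  have h6c : Real.cos (π * ((j:ℝ) + 12)) = Real.cos (π * j) := by
    rw [show π * ((j:ℝ) + 12) = π * j + ((6:ℤ):ℝ) * (2*π) by push_cast; ring]
    exact Real.cos_add_int_mul_two_pi _ 6
  fin_cases c <;> simp [fEnt] <;> push_cast <;>
    first
    | exact h1c | exact h1s | exact h2c | exact h2s | exact h3c | exact h3s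
    | exact h4c | exact h4s | exact h5c | exact h5s | exact h6c

lemma fEnt_dvd (c : Fin 12) {j : ℕ} (h : 12 ∣ j) : fEnt c j = fEnt c 0 := by
  obtain ⟨t, rfl⟩ := h
  induction t with
  | zero => rfl
  | succ k ih => rw [show 12 * (k+1) = 12 * k + 12 by ring, fEnt_add_twelve, ih]

lemma card_range_dvd (m : ℕ) :
    ((Finset.range (12 * m + 1)).filter (fun j => 12 ∣ j)).card = m + 1 := by
  induction m with
  | zero => decide
  | succ k ih =>
    have h1 : Finset.range (12 * (k+1) + 1)
        = Finset.range (12 * k + 1) ∪ Finset.Ico (12 * k + 1) (12 * (k+1) + 1) := by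
      ext x
      simp only [Finset.mem_union, Finset.mem_range, Finset.mem_Ico]
      omega
    have h2 : (Finset.Ico (12 * k + 1) (12 * (k+1) + 1)).filter (fun j => 12 ∣ j)
        = {12 * (k+1)} := by
      ext x
      simp only [Finset.mem_filter, Finset.mem_Ico, Finset.mem_singleton]
      omega
    rw [h1, Finset.filter_union, Finset.card_union_of_disjoint, ih, h2]
    · simp
    · rw [h2]
      simp only [Finset.disjoint_singleton_right, Finset.mem_filter, Finset.mem_range]
      omega

lemma stepB (m : ℕ) (c : Fin 12) :
    ∑ i : Fin (12*m+1), fEnt c i.val * (if 12 ∣ i.val then 1/((m:ℝ)+1) else 0) = fEnt c 0 := by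
  have hne : ((m:ℝ)+1) ≠ 0 := by positivity
  have key : ∀ i : Fin (12*m+1), fEnt c i.val * (if 12 ∣ i.val then 1/((m:ℝ)+1) else 0)
      = if 12 ∣ i.val then fEnt c 0 * (1/((m:ℝ)+1)) else 0 := by
    intro i; by_cases h : 12 ∣ i.val
    · rw [if_pos h, if_pos h, fEnt_dvd c h]
    · rw [if_neg h, if_neg h, mul_zero]
  rw [Finset.sum_congr rfl (fun i _ => key i)]
  rw [show (∑ i : Fin (12*m+1), if 12 ∣ i.val then fEnt c 0 * (1/((m:ℝ)+1)) else 0)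
      = ∑ j ∈ Finset.range (12*m+1), if 12 ∣ j then fEnt c 0 * (1/((m:ℝ)+1)) else 0
      from Fin.sum_univ_eq_sum_range (fun j => if 12 ∣ j then fEnt c 0 * (1/((m:ℝ)+1)) else 0) (12*m+1)]
  rw [← Finset.sum_filter, Finset.sum_const, card_range_dvd, nsmul_eq_mul]
  push_cast
  field_simp

noncomputable def Mmat : Matrix (Fin 12) (Fin 12) ℝ := fun j c => fEnt c j.val

noncomputable def Nmat : Matrix (Fin 12) (Fin 12) ℝ := fun c j =>
  fEnt c j.val / (if c.val = 0 ∨ c.val = 11 then 12 else 6)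

set_option maxHeartbeats 1000000 in
lemma MN : Mmat * Nmat = 1 := by
  ext j j'
  rw [Matrix.mul_apply, Matrix.one_apply]
  have hD := dirichlet ((j.val : ℤ) - (j'.val : ℤ))
  push_cast at hD
  simp only [Fin.sum_univ_succ, Finset.univ_unique, Finset.sum_singleton, Mmat, Nmat, fEnt]
  norm_num
  have hsa : Real.sin (π * ((j.val:ℕ):ℝ)) = 0 := by
    rw [mul_comm]; exact Real.sin_nat_mul_pi j.val
  have e1 : Real.cos (π * (((j.val:ℕ):ℝ) - ((j'.val:ℕ):ℝ)) / 6)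
      = Real.cos (π * j.val / 6) * Real.cos (π * j'.val / 6)
        + Real.sin (π * j.val / 6) * Real.sin (π * j'.val / 6) := by
    rw [show π * (((j.val:ℕ):ℝ) - ((j'.val:ℕ):ℝ)) / 6
        = π * j.val / 6 - π * j'.val / 6 by ring, Real.cos_sub]
  have e2 : Real.cos (π * 2 * (((j.val:ℕ):ℝ) - ((j'.val:ℕ):ℝ)) / 6)
      = Real.cos (π * 2 * j.val / 6) * Real.cos (π * 2 * j'.val / 6)
        + Real.sin (π * 2 * j.val / 6) * Real.sin (π * 2 * j'.val / 6) := by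
    rw [show π * 2 * (((j.val:ℕ):ℝ) - ((j'.val:ℕ):ℝ)) / 6
        = π * 2 * j.val / 6 - π * 2 * j'.val / 6 by ring, Real.cos_sub]
  have e3 : Real.cos (π * 3 * (((j.val:ℕ):ℝ) - ((j'.val:ℕ):ℝ)) / 6)
      = Real.cos (π * 3 * j.val / 6) * Real.cos (π * 3 * j'.val / 6)
        + Real.sin (π * 3 * j.val / 6) * Real.sin (π * 3 * j'.val / 6) := by
    rw [show π * 3 * (((j.val:ℕ):ℝ) - ((j'.val:ℕ):ℝ)) / 6
        = π * 3 * j.val / 6 - π * 3 * j'.val / 6 by ring, Real.cos_sub]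
  have e4 : Real.cos (π * 4 * (((j.val:ℕ):ℝ) - ((j'.val:ℕ):ℝ)) / 6)
      = Real.cos (π * 4 * j.val / 6) * Real.cos (π * 4 * j'.val / 6)
        + Real.sin (π * 4 * j.val / 6) * Real.sin (π * 4 * j'.val / 6) := by
    rw [show π * 4 * (((j.val:ℕ):ℝ) - ((j'.val:ℕ):ℝ)) / 6
        = π * 4 * j.val / 6 - π * 4 * j'.val / 6 by ring, Real.cos_sub]
  have e5 : Real.cos (π * 5 * (((j.val:ℕ):ℝ) - ((j'.val:ℕ):ℝ)) / 6)
      = Real.cos (π * 5 * j.val / 6) * Real.cos (π * 5 * j'.val / 6)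
        + Real.sin (π * 5 * j.val / 6) * Real.sin (π * 5 * j'.val / 6) := by
    rw [show π * 5 * (((j.val:ℕ):ℝ) - ((j'.val:ℕ):ℝ)) / 6
        = π * 5 * j.val / 6 - π * 5 * j'.val / 6 by ring, Real.cos_sub]
  have e6 : Real.cos (π * (((j.val:ℕ):ℝ) - ((j'.val:ℕ):ℝ)))
      = Real.cos (π * j.val) * Real.cos (π * j'.val) := by
    rw [show π * (((j.val:ℕ):ℝ) - ((j'.val:ℕ):ℝ)) = π * j.val - π * j'.val by ring,
      Real.cos_sub, hsa, zero_mul, add_zero]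
  have hiff : ((12:ℤ) ∣ (j.val:ℤ) - (j'.val:ℤ)) ↔ j = j' := by
    constructor
    · intro h
      have h1 := j.isLt
      have h2 := j'.isLt
      exact Fin.ext (by omega)
    · rintro rfl; simp
  simp only [hiff] at hD
  by_cases h : j = j'
  · rw [if_pos h] at hD ⊢
    linear_combination hD - (e1 + e2 + e3 + e4 + e5)/6 - e6/12
  · rw [if_neg h] at hD ⊢
    linear_combination hD - (e1 + e2 + e3 + e4 + e5)/6 - e6/12

end ClimateAux

section ClimateAux2
open Finset
noncomputable def vVec (m : ℕ) : Fin 12 → ℝ :=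
  ![1/(12*((m:ℝ)+1)), 1/(6*((m:ℝ)+1)), 0, 1/(6*((m:ℝ)+1)), 0, 1/(6*((m:ℝ)+1)), 0,
    1/(6*((m:ℝ)+1)), 0, 1/(6*((m:ℝ)+1)), 0, 1/(12*((m:ℝ)+1))]

lemma stepA (m : ℕ) (i : Fin (12 * m + 1)) :
    (XcMonthly m *ᵥ vVec m) i = if 12 ∣ i.val then 1 / ((m:ℝ) + 1) else 0 := by
  have hD := dirichlet (i.val : ℤ)
  push_cast at hD
  have hdd : ((12:ℤ) ∣ (i.val : ℤ)) ↔ 12 ∣ i.val := by exact_mod_cast Iff.rfl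
  simp only [hdd] at hD
  simp only [Matrix.mulVec, dotProduct, Fin.sum_univ_succ, Finset.univ_unique,
    Finset.sum_singleton, XcMonthly, vVec]
  norm_num
  simp only [Matrix.cons_val_two, Matrix.tail_cons, Matrix.head_cons]
  by_cases hdvd : 12 ∣ i.val
  · rw [if_pos hdvd] at hD ⊢
    linear_combination ((m:ℝ)+1)⁻¹ * hD
  · rw [if_neg hdvd] at hD ⊢
    linear_combination ((m:ℝ)+1)⁻¹ * hD

end ClimateAux2

lemma vec_eq_fEnt (m : ℕ) (i : Fin (12 * m + 1)) (c : Fin 12) :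
    XcMonthly m i c = fEnt c i.val := rfl

set_option maxHeartbeats 1000000 in
theorem one_sided_climate_normal_filter (m : ℕ) (hm : 1 ≤ m) :
    let Xc := XcMonthly m
    let x0 : Fin 12 → ℝ := Xc 0
    let wc : Fin (12 * m + 1) → ℝ := Xc *ᵥ ((Xcᵀ * Xc)⁻¹ *ᵥ x0)
    ∀ i : Fin (12 * m + 1),
      wc i = if 12 ∣ i.val then 1 / ((m : ℝ) + 1) else 0 := by
  intro Xc x0 wc i
  have hval0 : ((0 : Fin (12 * m + 1)) : ℕ) = 0 := Fin.val_zero (12 * m + 1)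
  -- step A as a function equation
  have hA : Xc *ᵥ vVec m = fun i : Fin (12 * m + 1) =>
      if 12 ∣ i.val then 1 / ((m:ℝ) + 1) else 0 := funext (stepA m)
  -- A v = x0
  have hAv : (Xcᵀ * Xc) *ᵥ vVec m = x0 := by
    rw [← Matrix.mulVec_mulVec, hA]
    ext c
    show ∑ i', Xcᵀ c i' * _ = x0 c
    simp only [Matrix.transpose_apply]
    have hx0 : x0 c = fEnt c 0 := by
      show XcMonthly m 0 c = fEnt c 0
      rw [vec_eq_fEnt, hval0]
    rw [hx0, ← stepB m c]
    exact Finset.sum_congr rfl (fun i' _ => rfl)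
  -- invertibility
  have hNM : Nmat * Mmat = 1 := mul_eq_one_comm.mp MN
  have hdet : IsUnit ((Xcᵀ * Xc).det) := by
    rw [isUnit_iff_ne_zero]
    intro hd
    obtain ⟨y, hy0, hAy⟩ := (Matrix.exists_mulVec_eq_zero_iff).mpr hd
    have hXy : Xc *ᵥ y = 0 := by
      rw [← dotProduct_self_eq_zero]
      calc (Xc *ᵥ y) ⬝ᵥ (Xc *ᵥ y) = (y ᵥ* Xcᵀ) ⬝ᵥ (Xc *ᵥ y) := by
            rw [Matrix.vecMul_transpose]
        _ = y ⬝ᵥ (Xcᵀ *ᵥ (Xc *ᵥ y)) := (Matrix.dotProduct_mulVec _ _ _).symm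
        _ = y ⬝ᵥ ((Xcᵀ * Xc) *ᵥ y) := by rw [Matrix.mulVec_mulVec]
        _ = 0 := by rw [hAy, dotProduct_zero]
    have hMy : Mmat *ᵥ y = 0 := by
      ext jj
      have hlt : jj.val < 12 * m + 1 := by have := jj.isLt; omega
      have h1 := congrFun hXy ⟨jj.val, hlt⟩
      simpa [Matrix.mulVec, dotProduct, Mmat, XcMonthly, fEnt, Xc] using h1
    have : y = 0 := by
      calc y = (1 : Matrix (Fin 12) (Fin 12) ℝ) *ᵥ y := (Matrix.one_mulVec y).symm
        _ = (Nmat * Mmat) *ᵥ y := by rw [hNM]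
        _ = Nmat *ᵥ (Mmat *ᵥ y) := (Matrix.mulVec_mulVec _ _ _).symm
        _ = Nmat *ᵥ 0 := by rw [hMy]
        _ = 0 := Matrix.mulVec_zero _
    exact hy0 this
  have hv : (Xcᵀ * Xc)⁻¹ *ᵥ x0 = vVec m := by
    rw [← hAv, Matrix.mulVec_mulVec, Matrix.nonsing_inv_mul _ hdet, Matrix.one_mulVec]
  show (Xc *ᵥ ((Xcᵀ * Xc)⁻¹ *ᵥ x0)) i = _
  rw [hv]
  exact stepA m i
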